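/- arXiv:2104.01248 — 9 statements merged into one kernel-verified Lean document; each statement's English description precedes it below -/
import Mathlib

section
/- (Govil) Let P be a polynomial of degree n all of whose zeros lie in the open unit disk, and let |z_m| = max_k |z_k| be the largest modulus of a zero. Then n/(1 + |z_m|) ≤ min_{z ∈ 𝕋} |P'(z)/P(z)|. -/
open Polynomial Finset

lemma logderiv_prod (S : Multiset ℂ) (z : ℂ) (h : ∀ a ∈ S, z ≠ a) :
    eval z (derivative (S.map (fun a => X - C a)).prod) =
      eval z (S.map (fun a => X - C a)).prod * (S.map (fun a => (z - a)⁻¹)).sum := by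
  induction S using Multiset.induction with
  | empty => simp
  | cons a T ih =>
    have hza : z - a ≠ 0 := sub_ne_zero.2 (h a (Multiset.mem_cons_self a T))
    have ihT := ih (fun b hb => h b (Multiset.mem_cons_of_mem hb))
    simp only [Multiset.map_cons, Multiset.prod_cons, Multiset.sum_cons, derivative_mul,
      derivative_X_sub_C, one_mul, eval_add, eval_mul, eval_sub, eval_X, eval_C, ihT]
    field_simp

lemma key_re (z r : ℂ) (m : ℝ) (hz : ‖z‖ = 1) (hr : ‖r‖ ≤ m) (hm : m < 1) :
    1 / (1 + m) ≤ (z / (z - r)).re := by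
  have hz2 : z.re ^ 2 + z.im ^ 2 = 1 := by
    have h1 : Complex.normSq z = 1 := by
      rw [← Complex.sq_norm, hz]; norm_num
    rw [Complex.normSq_apply] at h1; nlinarith
  have hr2 : r.re ^ 2 + r.im ^ 2 ≤ m ^ 2 := by
    have h0 : (0:ℝ) ≤ ‖r‖ := norm_nonneg r
    have h1 : Complex.normSq r = ‖r‖ ^ 2 := by
      rw [← Complex.sq_norm]
    rw [Complex.normSq_apply] at h1; nlinarith
  have hw : z - r ≠ 0 := by
    intro hc
    rw [sub_eq_zero] at hc
    rw [hc] at hz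
    linarith [hz ▸ hr]
  have hns : 0 < Complex.normSq (z - r) := Complex.normSq_pos.2 hw
  rw [Complex.div_re]
  have hnsv : Complex.normSq (z - r) = (z.re - r.re)^2 + (z.im - r.im)^2 := by
    simp [Complex.normSq_apply, sq]
  simp only [Complex.sub_re, Complex.sub_im]
  have hm0 : (0:ℝ) ≤ m := (norm_nonneg r).trans hr
  rw [← add_div, div_le_div_iff₀ (by linarith) hns, hnsv]
  have hρ2 : ‖r‖ ^ 2 = r.re ^ 2 + r.im ^ 2 := by
    rw [Complex.sq_norm, Complex.normSq_apply]; ring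
  have hcs : (z.re * r.re + z.im * r.im) ^ 2 ≤ ‖r‖ ^ 2 := by
    nlinarith [sq_nonneg (z.re * r.im - z.im * r.re)]
  have ht : -‖r‖ ≤ z.re * r.re + z.im * r.im := by
    nlinarith [norm_nonneg r]
  nlinarith [mul_nonneg (sub_nonneg.2 hr) (by positivity : (0:ℝ) ≤ 1 + ‖r‖),
    mul_nonneg (by linarith : (0:ℝ) ≤ z.re * r.re + z.im * r.im + ‖r‖)
      (by linarith : (0:ℝ) ≤ 1 - m)]

/-- (Govil) If all zeros of `P` lie in the open unit disk and `zm` is a zero of maximal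
modulus, then `n/(1+|zm|) ≤ |P'(z)/P(z)|` on the unit circle. -/
theorem stmt4 (P : Polynomial ℂ) (hP : P ≠ 0) (hn : 1 ≤ P.natDegree)
    (hroots : ∀ w : ℂ, P.eval w = 0 → ‖w‖ < 1)
    (zm : ℂ) (hzm : P.eval zm = 0) (hmax : ∀ w : ℂ, P.eval w = 0 → ‖w‖ ≤ ‖zm‖)
    (z : ℂ) (hz : ‖z‖ = 1) :
    (P.natDegree : ℝ) / (1 + ‖zm‖) ≤ ‖P.derivative.eval z / P.eval z‖ := by
  set m : ℝ := ‖zm‖ with hmdef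
  have hm1 : m < 1 := hroots zm hzm
  have hm0 : 0 ≤ m := norm_nonneg zm
  have hcard : Multiset.card P.roots = P.natDegree :=
    splits_iff_card_roots.1 (IsAlgClosed.splits P)
  have hroot_mem : ∀ a ∈ P.roots, P.eval a = 0 := fun a ha =>
    (mem_roots hP).1 ha
  have hzne : ∀ a ∈ P.roots, z ≠ a := by
    intro a ha hc
    have := hroots a (hroot_mem a ha)
    rw [← hc, hz] at this; linarith
  have hQ := C_leadingCoeff_mul_prod_multiset_X_sub_C (p := P) hcard
  set Q : Polynomial ℂ := (P.roots.map (fun a => X - C a)).prod with hQdef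
  have hPz : P.eval z ≠ 0 := fun hc => by have := hroots z hc; rw [hz] at this; linarith
  have hQz : Q.eval z ≠ 0 := by
    intro hc
    apply hPz
    rw [← hQ]; simp [hc]
  set s : ℂ := (P.roots.map (fun a => (z - a)⁻¹)).sum with hsdef
  have hlc : P.leadingCoeff ≠ 0 := leadingCoeff_ne_zero.2 hP
  have hld : P.derivative.eval z / P.eval z = s := by
    have hD := logderiv_prod P.roots z hzne
    conv_lhs => rw [← hQ]
    simp only [derivative_C_mul, eval_mul, eval_C, hQdef, hD, ← hsdef]
    rw [← hQdef] at *
    field_simp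
  -- real part bound on z * s
  have hre : (P.natDegree : ℝ) / (1 + m) ≤ (z * s).re := by
    have hmul : ∀ (T : Multiset ℂ), z * (T.map fun a => (z - a)⁻¹).sum
        = (T.map fun a => z / (z - a)).sum := by
      intro T; induction T using Multiset.induction with
      | empty => simp
      | cons a T ih => simp [mul_add, ih, div_eq_mul_inv]
    have hre_sum : ∀ (T : Multiset ℂ), T.sum.re = (T.map Complex.re).sum := by
      intro T; induction T using Multiset.induction with
      | empty => simp
      | cons a T ih => simp [ih]
    rw [hsdef, hmul, hre_sum, Multiset.map_map]
    show _ ≤ (P.roots.map fun a => (z / (z - a)).re).sum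
    calc (P.natDegree : ℝ) / (1 + m)
        = (Multiset.card P.roots) • (1 / (1 + m)) := by
          rw [hcard]; simp [div_eq_mul_inv, nsmul_eq_mul]
      _ = Multiset.card (P.roots.map (fun a => (z / (z - a)).re)) • (1 / (1 + m)) := by
          rw [Multiset.card_map]
      _ ≤ _ := by
          apply Multiset.card_nsmul_le_sum
          intro x hx
          obtain ⟨a, ha, rfl⟩ := Multiset.mem_map.1 hx
          exact key_re z a m hz (hmax a (hroot_mem a ha)) hm1
  calc (P.natDegree : ℝ) / (1 + m) ≤ (z * s).re := hre
    _ ≤ ‖z * s‖ := Complex.re_le_norm _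
    _ = ‖s‖ := by rw [norm_mul, hz, one_mul]
    _ = ‖P.derivative.eval z / P.eval z‖ := by rw [hld]
end

section
/- Let P be a polynomial of degree n all of whose zeros z satisfy |z| ≥ 1. Then Re(zP'(z)/P(z)) ≤ n/2 for every z in the closed unit disk at which P(z) ≠ 0. -/
open Polynomial

lemma half_bound (z r : ℂ) (hz : ‖z‖ ≤ 1) (hr : 1 ≤ ‖r‖) (hne : z - r ≠ 0) :
    (z * (z - r)⁻¹).re ≤ 1 / 2 := by
  have e1 : Complex.normSq z = ‖z‖ ^ 2 := by
    rw [Complex.normSq_eq_norm_sq]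
  have e2 : Complex.normSq r = ‖r‖ ^ 2 := by
    rw [Complex.normSq_eq_norm_sq]
  have h1 : Complex.normSq z ≤ 1 := by nlinarith [norm_nonneg z]
  have h2 : 1 ≤ Complex.normSq r := by nlinarith [norm_nonneg r]
  have hpos : 0 < Complex.normSq (z - r) := Complex.normSq_pos.mpr hne
  rw [← div_eq_mul_inv, Complex.div_re, ← add_div, div_le_iff₀ hpos]
  simp only [Complex.normSq_apply, Complex.sub_re, Complex.sub_im] at *
  nlinarith

lemma deriv_eval (z : ℂ) (s : Multiset ℂ) (h : ∀ r ∈ s, z - r ≠ 0) (c : ℂ) :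
    eval z (derivative (C c * (s.map (fun r => X - C r)).prod))
      = eval z (C c * (s.map (fun r => X - C r)).prod)
        * (s.map (fun r => (z - r)⁻¹)).sum := by
  induction s using Multiset.induction with
  | empty => simp
  | cons a t ih =>
    have ha : z - a ≠ 0 := h a (Multiset.mem_cons_self a t)
    have ht : ∀ r ∈ t, z - r ≠ 0 := fun r hr => h r (Multiset.mem_cons_of_mem hr)
    simp only [Multiset.map_cons, Multiset.prod_cons, Multiset.sum_cons]
    rw [mul_left_comm, derivative_mul, derivative_sub, derivative_X, derivative_C,
      sub_zero, one_mul]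
    simp only [eval_add, eval_mul, eval_sub, eval_X, eval_C, ih ht]
    field_simp

/-- If all zeros of `P` satisfy `|w| ≥ 1`, then `Re(zP'(z)/P(z)) ≤ n/2` on the closed unit
disk, wherever `P(z) ≠ 0`. -/
theorem stmt5 (P : Polynomial ℂ) (n : ℕ) (hn : P.natDegree = n) (hP : P ≠ 0)
    (hroots : ∀ w : ℂ, P.eval w = 0 → 1 ≤ ‖w‖)
    (z : ℂ) (hz : ‖z‖ ≤ 1) (hPz : P.eval z ≠ 0) :
    (z * P.derivative.eval z / P.eval z).re ≤ (n : ℝ) / 2 := by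
  have hsplit : P.Splits := IsAlgClosed.splits P
  have hfac := hsplit.eq_prod_roots
  have hne : ∀ r ∈ P.roots, z - r ≠ 0 := by
    intro r hr hzr
    apply hPz
    rw [sub_eq_zero] at hzr
    subst hzr
    exact (mem_roots hP).mp hr
  have hcard : P.roots.card = n := by
    rw [← hn]
    exact (splits_iff_card_roots.mp hsplit)
  have hD : eval z (derivative P) = eval z P * (P.roots.map (fun r => (z - r)⁻¹)).sum := by
    have h := deriv_eval z P.roots hne P.leadingCoeff
    rw [← hfac] at h
    exact h
  have hkey : z * P.derivative.eval z / P.eval z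
      = (P.roots.map (fun r => z * (z - r)⁻¹)).sum := by
    rw [hD, mul_comm (eval z P), ← mul_assoc, mul_div_assoc, div_self hPz, mul_one,
      ← Multiset.sum_map_mul_left]
  rw [hkey]
  have hre : ((P.roots.map (fun r => z * (z - r)⁻¹)).sum).re
      = ((P.roots.map (fun r => (z * (z - r)⁻¹).re)).sum) := by
    have h := map_multiset_sum Complex.reAddGroupHom (P.roots.map (fun r => z * (z - r)⁻¹))
    simpa [Multiset.map_map, Function.comp] using h
  rw [hre]
  calc ((P.roots.map (fun r => (z * (z - r)⁻¹).re)).sum)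
      ≤ (P.roots.map (fun r => (z * (z - r)⁻¹).re)).card • (1/2 : ℝ) := by
        apply Multiset.sum_le_card_nsmul
        intro x hx
        obtain ⟨r, hr, rfl⟩ := Multiset.mem_map.mp hx
        exact half_bound z r hz (hroots r ((mem_roots hP).mp hr)) (hne r hr)
    _ = (n : ℝ) / 2 := by
        rw [Multiset.card_map, hcard]
        simp [nsmul_eq_mul]
        ring
end

section
/- Let P be a polynomial of degree n all of whose zeros z satisfy |z| ≥ 2. Then |zP'(z)| ≤ n|P(z)| for all z in the closed unit disk. -/
open Polynomial

lemma aux_prod (s : Multiset ℂ) (hs : ∀ r ∈ s, (2:ℝ) ≤ ‖r‖) (z : ℂ) (hz : ‖z‖ ≤ 1) :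
    ‖z * (derivative (s.map (fun r => X - C r)).prod).eval z‖ ≤
      s.card * ‖((s.map (fun r => X - C r)).prod).eval z‖ := by
  induction s using Multiset.induction_on with
  | empty => simp
  | cons r t ih =>
    have hr : (2:ℝ) ≤ ‖r‖ := hs r (Multiset.mem_cons_self r t)
    have ht : ∀ x ∈ t, (2:ℝ) ≤ ‖x‖ := fun x hx => hs x (Multiset.mem_cons_of_mem hx)
    have ih' := ih ht
    set Q := ((t.map (fun r => X - C r)).prod) with hQ
    have hzr : (1:ℝ) ≤ ‖z - r‖ := by
      have h := norm_sub_norm_le r z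
      rw [norm_sub_rev]
      linarith
    have key : z * (derivative ((X - C r) * Q)).eval z
        = z * Q.eval z + (z - r) * (z * (derivative Q).eval z) := by
      simp [derivative_mul]
      ring
    simp only [Multiset.map_cons, Multiset.prod_cons, Multiset.card_cons, ← hQ, key, Nat.cast_add, Nat.cast_one]
    have h3 : ‖((X - C r) * Q).eval z‖ = ‖z - r‖ * ‖Q.eval z‖ := by
      simp [norm_mul]
    rw [h3]
    refine (norm_add_le _ _).trans ?_
    rw [norm_mul, norm_mul]
    have h4 : ‖z‖ * ‖Q.eval z‖ ≤ ‖z - r‖ * ‖Q.eval z‖ :=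
      mul_le_mul_of_nonneg_right (hz.trans hzr) (norm_nonneg _)
    have h5 : ‖z - r‖ * ‖z * (derivative Q).eval z‖ ≤ ‖z - r‖ * (t.card * ‖Q.eval z‖) :=
      mul_le_mul_of_nonneg_left ih' (norm_nonneg _)
    have h6 : (0:ℝ) ≤ ‖z - r‖ * ‖Q.eval z‖ := by positivity
    nlinarith [h4, h5, h6]

/-- Pointwise Bernstein inequality: if all zeros of `P` satisfy `|w| ≥ 2`, then
`|zP'(z)| ≤ n|P(z)|` on the closed unit disk. -/
theorem stmt8 (P : Polynomial ℂ) (n : ℕ) (hn : P.natDegree = n) (hP : P ≠ 0)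
    (hroots : ∀ w : ℂ, P.eval w = 0 → 2 ≤ ‖w‖)
    (z : ℂ) (hz : ‖z‖ ≤ 1) :
    ‖z * P.derivative.eval z‖ ≤ n * ‖P.eval z‖ := by
  have hcard : P.roots.card = P.natDegree :=
    Polynomial.splits_iff_card_roots.mp (IsAlgClosed.splits P)
  have hfac := (Polynomial.C_leadingCoeff_mul_prod_multiset_X_sub_C hcard).symm
  have hrs : ∀ r ∈ P.roots, (2:ℝ) ≤ ‖r‖ := fun r hr =>
    hroots r (Polynomial.isRoot_of_mem_roots hr)
  have haux := aux_prod P.roots hrs z hz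
  set Q := ((P.roots.map (fun r => X - C r)).prod) with hQ
  have h1 : P.eval z = P.leadingCoeff * Q.eval z := by
    conv_lhs => rw [hfac]
    simp
  have h2 : P.derivative.eval z = P.leadingCoeff * (derivative Q).eval z := by
    conv_lhs => rw [hfac]
    simp [derivative_mul]
  rw [h1, h2]
  rw [hcard, hn] at haux
  calc ‖z * (P.leadingCoeff * (derivative Q).eval z)‖
      = ‖P.leadingCoeff‖ * ‖z * (derivative Q).eval z‖ := by
        rw [norm_mul, norm_mul, norm_mul]; ring
    _ ≤ ‖P.leadingCoeff‖ * (n * ‖Q.eval z‖) := by gcongr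
    _ = n * ‖P.leadingCoeff * Q.eval z‖ := by rw [norm_mul]; ring
end

section
/- Let P be a polynomial of degree n all of whose zeros z satisfy |z| ≥ 2. Then |zP'(z)| ≤ min(|nP(z) - zP'(z)|, n|P(z)|) for all z in the closed unit disk. -/
open Polynomial

lemma deriv_prod_eval (z : ℂ) (S : Multiset ℂ) (hS : ∀ r ∈ S, z - r ≠ 0) :
    eval z (derivative (S.map (fun a => X - C a)).prod)
      = eval z (S.map (fun a => X - C a)).prod * (S.map (fun r => (z - r)⁻¹)).sum := by
  induction S using Multiset.induction with
  | empty => simp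
  | cons r T ih =>
    have hzr : z - r ≠ 0 := hS r (Multiset.mem_cons_self r T)
    have hT : ∀ s ∈ T, z - s ≠ 0 := fun s hs => hS s (Multiset.mem_cons_of_mem hs)
    simp only [Multiset.map_cons, Multiset.prod_cons, Multiset.sum_cons, derivative_mul,
      derivative_sub, derivative_X, derivative_C, sub_zero, one_mul, eval_add, eval_mul,
      eval_sub, eval_X, eval_C, ih hT]
    field_simp

/-- If all zeros of `P` satisfy `|w| ≥ 2`, then
`|zP'(z)| ≤ min(|nP(z) - zP'(z)|, n|P(z)|)` on the closed unit disk. -/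
theorem stmt9 (P : Polynomial ℂ) (n : ℕ) (hn : P.natDegree = n) (hP : P ≠ 0)
    (hroots : ∀ w : ℂ, P.eval w = 0 → 2 ≤ ‖w‖)
    (z : ℂ) (hz : ‖z‖ ≤ 1) :
    ‖z * P.derivative.eval z‖
      ≤ min ‖(n : ℂ) * P.eval z - z * P.derivative.eval z‖ (n * ‖P.eval z‖) := by
  -- setup
  have hcard : Multiset.card P.roots = n := by
    rw [← hn]
    exact (splits_iff_card_roots).mp (IsAlgClosed.splits P)
  have hPz : P.eval z ≠ 0 := by
    intro h
    have := hroots z h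
    linarith
  have hden : ∀ r ∈ P.roots, z - r ≠ 0 := by
    intro r hr
    have hr2 : 2 ≤ ‖r‖ := hroots r ((mem_roots hP).mp hr)
    intro h
    rw [sub_eq_zero] at h
    rw [h] at hz
    linarith
  have hden1 : ∀ r ∈ P.roots, (1:ℝ) ≤ ‖z - r‖ := by
    intro r hr
    have hr2 : 2 ≤ ‖r‖ := hroots r ((mem_roots hP).mp hr)
    calc (1:ℝ) = 2 - 1 := by norm_num
    _ ≤ ‖r‖ - ‖z‖ := by linarith
    _ ≤ ‖r - z‖ := by
        have := norm_sub_norm_le r z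
        linarith
    _ = ‖z - r‖ := norm_sub_rev r z
  -- factorization
  have hfac : C P.leadingCoeff * (P.roots.map (fun a => X - C a)).prod = P :=
    C_leadingCoeff_mul_prod_multiset_X_sub_C (hcard.trans hn.symm)
  set S : ℂ := (P.roots.map (fun r => z * (z - r)⁻¹)).sum with hSdef
  have hSsum : S = z * (P.roots.map (fun r => (z - r)⁻¹)).sum := by
    rw [hSdef, Multiset.sum_map_mul_left]
  have key : z * P.derivative.eval z = P.eval z * S := by
    have h1 : P.derivative
        = C P.leadingCoeff * derivative (P.roots.map (fun a => X - C a)).prod := by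
      conv_lhs => rw [← hfac]
      rw [derivative_mul, derivative_C, zero_mul, zero_add]
    have h2 : P.eval z = P.leadingCoeff * eval z (P.roots.map (fun a => X - C a)).prod := by
      conv_lhs => rw [← hfac]
      rw [eval_mul, eval_C]
    rw [h1, h2, eval_mul, eval_C, deriv_prod_eval z P.roots hden, hSsum]
    ring
  -- bound each term
  have hterm_norm : ∀ u ∈ P.roots.map (fun r => z * (z - r)⁻¹), ‖u‖ ≤ 1 := by
    intro u hu
    obtain ⟨r, hr, rfl⟩ := Multiset.mem_map.mp hu
    rw [norm_mul, norm_inv]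
    have h1 := hden1 r hr
    have hnz : ‖z - r‖ ≠ 0 := by positivity
    rw [mul_inv_le_iff₀ (by positivity), one_mul]
    linarith
  have hterm_re : ∀ u ∈ P.roots.map (fun r => z * (z - r)⁻¹), u.re ≤ 1/2 := by
    intro u hu
    obtain ⟨r, hr, rfl⟩ := Multiset.mem_map.mp hu
    have hzr : z - r ≠ 0 := hden r hr
    have h1u : 1 - z * (z - r)⁻¹ = -r * (z - r)⁻¹ := by
      field_simp
      ring
    have hle : ‖z * (z - r)⁻¹‖ ≤ ‖1 - z * (z - r)⁻¹‖ := by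
      rw [h1u, norm_mul, norm_mul, norm_neg]
      have hr2 : 2 ≤ ‖r‖ := hroots r ((mem_roots hP).mp hr)
      have : ‖z‖ ≤ ‖r‖ := by linarith
      exact mul_le_mul_of_nonneg_right this (by positivity)
    have hsq : ‖z * (z - r)⁻¹‖^2 ≤ ‖1 - z * (z - r)⁻¹‖^2 :=
      pow_le_pow_left₀ (norm_nonneg _) hle 2
    rw [← Complex.normSq_eq_norm_sq,
      ← Complex.normSq_eq_norm_sq] at hsq
    simp only [Complex.normSq_apply, Complex.sub_re, Complex.sub_im, Complex.one_re,
      Complex.one_im] at hsq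
    nlinarith [hsq]
  -- norm of sum bound
  have hS_norm : ‖S‖ ≤ n := by
    calc ‖S‖ ≤ ((P.roots.map (fun r => z * (z - r)⁻¹)).map norm).sum :=
          norm_multiset_sum_le _
    _ ≤ Multiset.card ((P.roots.map (fun r => z * (z - r)⁻¹)).map norm) • (1:ℝ) := by
          apply Multiset.sum_le_card_nsmul
          intro x hx
          obtain ⟨u, hu, rfl⟩ := Multiset.mem_map.mp hx
          exact hterm_norm u hu
    _ = n := by simp [hcard]
  have hS_re : S.re ≤ n / 2 := by
    have : S.re = ((P.roots.map (fun r => z * (z - r)⁻¹)).map Complex.re).sum := by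
      rw [hSdef]
      exact (map_multiset_sum Complex.reAddGroupHom _).trans (by simp)
    rw [this]
    calc ((P.roots.map (fun r => z * (z - r)⁻¹)).map Complex.re).sum
        ≤ Multiset.card ((P.roots.map (fun r => z * (z - r)⁻¹)).map Complex.re) • (1/2 : ℝ) := by
          apply Multiset.sum_le_card_nsmul
          intro x hx
          obtain ⟨u, hu, rfl⟩ := Multiset.mem_map.mp hx
          exact hterm_re u hu
    _ = n / 2 := by simp [hcard]; ring
  have hS_le : ‖S‖ ≤ ‖(n : ℂ) - S‖ := by
    have hsq : ‖S‖^2 ≤ ‖(n : ℂ) - S‖^2 := by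
      rw [← Complex.normSq_eq_norm_sq,
        ← Complex.normSq_eq_norm_sq]
      simp only [Complex.normSq_apply, Complex.sub_re, Complex.sub_im, Complex.natCast_re,
        Complex.natCast_im]
      have h1 : S.re ≤ n / 2 := hS_re
      nlinarith [sq_nonneg ((n:ℝ) - S.re)]
    exact (pow_le_pow_iff_left₀ (norm_nonneg _) (norm_nonneg _) two_ne_zero).mp hsq
  -- conclude
  rw [key]
  apply le_min
  · have h2 : (n : ℂ) * P.eval z - P.eval z * S = P.eval z * ((n : ℂ) - S) := by ring
    rw [h2, norm_mul, norm_mul]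
    exact mul_le_mul_of_nonneg_left hS_le (norm_nonneg _)
  · rw [norm_mul]
    calc ‖P.eval z‖ * ‖S‖ ≤ ‖P.eval z‖ * n :=
          mul_le_mul_of_nonneg_left hS_norm (norm_nonneg _)
    _ = n * ‖P.eval z‖ := mul_comm _ _
end

section
/- Let P(z) = ∑_{j=0}^n a_j z^j with n ≥ 1 and a_n ≠ 0. Then for all z ≠ 0 and all w ∈ ℂ with w ≠ z, z(P(z) - P(w))/(z - w) = ∑_{k=0}^{n-1} (P(z) - ∑_{j=0}^k a_j z^j)(w/z)^k. -/
open Finset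

/-- The summation-by-parts identity of Lemma 2.2. -/
theorem stmt12 (n : ℕ) (hn : 1 ≤ n) (a : ℕ → ℂ) (han : a n ≠ 0)
    (P : ℂ → ℂ) (hP : ∀ z, P z = ∑ j ∈ Finset.range (n + 1), a j * z ^ j)
    (z w : ℂ) (hz : z ≠ 0) (hw : w ≠ z) :
    z * (P z - P w) / (z - w)
      = ∑ k ∈ Finset.range n,
          (P z - ∑ j ∈ Finset.range (k + 1), a j * z ^ j) * (w / z) ^ k := by
  have hzw : z - w ≠ 0 := sub_ne_zero.mpr (Ne.symm hw)
  rw [div_eq_iff hzw]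
  have hpart : ∀ k ∈ Finset.range n,
      (P z - ∑ j ∈ Finset.range (k + 1), a j * z ^ j) * (w / z) ^ k
        = ∑ j ∈ Finset.Ico (k + 1) (n + 1), (a j * z ^ j) * (w / z) ^ k := by
    intro k hk
    rw [Finset.mem_range] at hk
    rw [hP z, ← Finset.sum_Ico_eq_sub (fun j => a j * z ^ j) (by omega : k + 1 ≤ n + 1),
      Finset.sum_mul]
  rw [Finset.sum_congr rfl hpart]
  have h1 : (∑ k ∈ Finset.range n, ∑ j ∈ Finset.Ico (k + 1) (n + 1),
        (a j * z ^ j) * (w / z) ^ k)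
      = ∑ k ∈ Finset.range (n + 1), ∑ j ∈ Finset.Ico (k + 1) (n + 1),
        (a j * z ^ j) * (w / z) ^ k := by
    rw [Finset.sum_range_succ, Finset.Ico_self, Finset.sum_empty, add_zero]
  rw [h1]
  have h2 : (∑ k ∈ Finset.range (n + 1), ∑ j ∈ Finset.Ico (k + 1) (n + 1),
        (a j * z ^ j) * (w / z) ^ k)
      = ∑ j ∈ Finset.range (n + 1), ∑ k ∈ Finset.range j, (a j * z ^ j) * (w / z) ^ k := by
    rw [← Nat.Ico_zero_eq_range, Finset.sum_Ico_Ico_comm']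
    simp only [Nat.Ico_zero_eq_range]
  rw [h2, hP z, hP w, ← Finset.sum_sub_distrib, Finset.mul_sum, Finset.sum_mul]
  obtain ⟨u, rfl⟩ : ∃ u, w = u * z := ⟨w / z, (div_mul_cancel₀ w hz).symm⟩
  apply Finset.sum_congr rfl
  intro j _
  rw [mul_div_cancel_right₀ _ hz, ← Finset.mul_sum]
  have hg := geom_sum_mul u j
  linear_combination (a j * z ^ (j + 1)) * hg
end

section
/- Let P(z) = ∑_{j=0}^n a_j z^j with n ≥ 1 and a_n ≠ 0. Then for all z ≠ 0 and w ∈ ℂ (with w ≠ z), |z(P(z) - P(w))/(z - w)| ≤ A(z,w) · max_{0 ≤ k ≤ n-1} |P(z) - ∑_{j=0}^k a_j z^j|, where A(z,w) = (|z|^n - |w|^n)/(|z|^{n-1}(|z| - |w|)) if |z| ≠ |w| and A(z,w) = n if |z| = |w|. -/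
open Finset

lemma key13 (n : ℕ) (a : ℕ → ℂ) (z w : ℂ) (hz : z ≠ 0) :
    z * ((∑ j ∈ range (n+1), a j * z ^ j) - (∑ j ∈ range (n+1), a j * w ^ j))
      = (z - w) * ∑ k ∈ range n, (w/z)^k * (∑ j ∈ Ico (k+1) (n+1), a j * z ^ j) := by
  have h1 : ∑ k ∈ range n, (w/z)^k * (∑ j ∈ Ico (k+1) (n+1), a j * z ^ j)
      = ∑ k ∈ range (n+1), (w/z)^k * (∑ j ∈ Ico (k+1) (n+1), a j * z ^ j) := by
    rw [sum_range_succ, Ico_self, sum_empty, mul_zero, add_zero]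
  rw [h1]
  have h2 : ∀ k, (w/z)^k * (∑ j ∈ Ico (k+1) (n+1), a j * z ^ j)
      = ∑ j ∈ Ico (k+1) (n+1), (w/z)^k * (a j * z ^ j) := fun k => mul_sum _ _ _
  simp only [h2]
  rw [show ∀ (f : ℕ → ℕ → ℂ), (∑ k ∈ range (n+1), ∑ j ∈ Ico (k+1) (n+1), f k j)
      = ∑ j ∈ range (n+1), ∑ k ∈ range j, f k j from ?_]
  · rw [← sum_sub_distrib, mul_sum, mul_sum]
    refine sum_congr rfl fun j _ => ?_
    calc z * (a j * z ^ j - a j * w ^ j)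
        = z * (a j * ((∑ i ∈ range j, z^i * w^(j-1-i)) * (z - w))) := by rw [geom_sum₂_mul]; ring
      _ = (z - w) * ∑ i ∈ range j, a j * (z * z^i * w^(j-1-i)) := by
            simp only [mul_sum, sum_mul]; exact sum_congr rfl fun i _ => by ring
      _ = (z - w) * ∑ k ∈ range j, (w/z)^k * (a j * z ^ j) := ?_
    rw [← Finset.sum_range_reflect (fun i => a j * (z * z^i * w^(j-1-i))) j]
    congr 1
    refine sum_congr rfl fun k hk => ?_
    rw [mem_range] at hk
    have h3 : j - 1 - (j - 1 - k) = k := by omega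
    rw [h3]
    have h4 : z ^ j = z ^ (j - 1 - k) * z * z ^ k := by
      rw [← pow_succ, ← pow_add]; congr 1; omega
    rw [h4, div_pow]
    field_simp
  · intro f
    have := Finset.sum_Ico_Ico_comm' 0 (n+1) f
    simpa using this

/-- Lemma 2.2: the divided-difference estimate with the sharp factor `A(z,w)`. -/
theorem stmt13 (n : ℕ) (hn : 1 ≤ n) (a : ℕ → ℂ) (han : a n ≠ 0)
    (P : ℂ → ℂ) (hP : ∀ z, P z = ∑ j ∈ Finset.range (n + 1), a j * z ^ j)
    (z w : ℂ) (hz : z ≠ 0) (hw : w ≠ z) :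
    ‖z * (P z - P w) / (z - w)‖
      ≤ (if ‖z‖ ≠ ‖w‖ then (‖z‖ ^ n - ‖w‖ ^ n) / (‖z‖ ^ (n - 1) * (‖z‖ - ‖w‖))
          else (n : ℝ)) *
        ⨆ k : Fin n, ‖P z - ∑ j ∈ Finset.range (k.1 + 1), a j * z ^ j‖ := by
  have hzw : z - w ≠ 0 := sub_ne_zero.mpr (Ne.symm hw)
  have hz' : (0:ℝ) < ‖z‖ := norm_pos_iff.mpr hz
  set r : ℝ := ‖w‖ / ‖z‖ with hr
  have hr0 : 0 ≤ r := div_nonneg (norm_nonneg w) (norm_nonneg z)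
  set M := ⨆ k : Fin n, ‖P z - ∑ j ∈ Finset.range (k.1 + 1), a j * z ^ j‖ with hM
  -- the tail identity
  have hT : ∀ k, k < n → (∑ j ∈ Ico (k+1) (n+1), a j * z ^ j)
      = P z - ∑ j ∈ range (k + 1), a j * z ^ j := by
    intro k hk
    rw [hP, Finset.sum_Ico_eq_sub _ (by omega)]
  have hTk : ∀ k, k < n → ‖∑ j ∈ Ico (k+1) (n+1), a j * z ^ j‖ ≤ M := by
    intro k hk
    rw [hT k hk]
    exact le_ciSup (f := fun k : Fin n => ‖P z - ∑ j ∈ Finset.range (k.1 + 1), a j * z ^ j‖)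
      (Set.Finite.bddAbove (Set.finite_range _)) ⟨k, hk⟩
  -- rewrite LHS
  have hkey : z * (P z - P w) / (z - w)
      = ∑ k ∈ range n, (w/z)^k * (∑ j ∈ Ico (k+1) (n+1), a j * z ^ j) := by
    rw [div_eq_iff hzw, hP z, hP w, key13 n a z w hz]; ring
  rw [hkey]
  -- the factor equals the geometric sum
  have hA : (if ‖z‖ ≠ ‖w‖ then (‖z‖ ^ n - ‖w‖ ^ n) / (‖z‖ ^ (n - 1) * (‖z‖ - ‖w‖))
      else (n : ℝ)) = ∑ k ∈ range n, r ^ k := by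
    split_ifs with h
    · have hzw' : ‖z‖ - ‖w‖ ≠ 0 := sub_ne_zero.mpr h
      have hr1 : r ≠ 1 := fun hr1 => h ((div_eq_one_iff_eq hz'.ne').mp hr1).symm
      rw [geom_sum_eq hr1]
      obtain ⟨m, rfl⟩ : ∃ m, n = m + 1 := ⟨n - 1, by omega⟩
      have hrm1 : r - 1 ≠ 0 := sub_ne_zero.mpr hr1
      have hden : ‖z‖ ^ (m + 1 - 1) * (‖z‖ - ‖w‖) ≠ 0 :=
        mul_ne_zero (pow_ne_zero _ hz'.ne') hzw'
      rw [div_eq_div_iff hden hrm1]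
      have hzm : (‖z‖:ℝ)^(m+1) ≠ 0 := pow_ne_zero _ hz'.ne'
      simp only [Nat.add_sub_cancel, hr, div_pow]
      rw [div_sub_one hz'.ne', div_sub_one hzm, ← mul_div_assoc, div_mul_eq_mul_div,
        div_eq_div_iff hz'.ne' hzm]
      ring
    · push_neg at h
      have hr1 : r = 1 := by rw [hr, ← h, div_self hz'.ne']
      simp [hr1]
  rw [hA]
  calc ‖∑ k ∈ range n, (w/z)^k * (∑ j ∈ Ico (k+1) (n+1), a j * z ^ j)‖
      ≤ ∑ k ∈ range n, r ^ k * ‖∑ j ∈ Ico (k+1) (n+1), a j * z ^ j‖ := by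
        refine (norm_sum_le _ _).trans (le_of_eq (sum_congr rfl fun k _ => ?_))
        rw [norm_mul, norm_pow, norm_div]
    _ ≤ ∑ k ∈ range n, r ^ k * M := by
        refine sum_le_sum fun k hk => ?_
        exact mul_le_mul_of_nonneg_left (hTk k (mem_range.mp hk)) (pow_nonneg hr0 k)
    _ = (∑ k ∈ range n, r ^ k) * M := (sum_mul _ _ _).symm
end

section
/- Let P(z) = ∑_{ν=0}^n a_ν z^{k_ν} with 0 ≤ k_0 < k_1 < ... < k_n integers and all a_ν ∈ ℂ \ {0}. Suppose for each ν = 0,...,n, min over t in the closed unit disk of Re ∑_{j=0}^{n-ν} (a_{j+ν}/a_ν) t^{k_{j+ν} - k_ν} is ≥ 1/2. Then for all z in the closed unit disk, |P(z)| ≥ |ρ_{k_0}(P)(z)| ≥ ... ≥ |ρ_{k_n}(P)(z)| = |a_n z^{k_n}|, where ρ_k(P)(z) denotes the tail ∑ over indices k_ν ≥ k of a_ν z^{k_ν}. -/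
open Finset

lemma norm_sub_one_le_of_half_le_re {Q : ℂ} (h : 1 / 2 ≤ Q.re) : ‖Q - 1‖ ≤ ‖Q‖ := by
  have h1 : Complex.normSq (Q - 1) ≤ Complex.normSq Q := by
    rw [Complex.normSq_sub]
    simp [Complex.normSq_apply]
    nlinarith [h]
  calc ‖Q - 1‖ = Real.sqrt (Complex.normSq (Q - 1)) := by
        rw [Complex.norm_def]
    _ ≤ Real.sqrt (Complex.normSq Q) := Real.sqrt_le_sqrt h1
    _ = ‖Q‖ := by rw [Complex.norm_def]

/-- Under the main condition (1.12), the moduli of the tails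
`ρ_{k_ν}(P)(z) = ∑_{μ=ν}^n a_μ z^{k_μ}` form a non-increasing chain on the closed unit
disk, starting at `|P(z)|` and ending at `|a_n z^{k_n}|`. -/
theorem stmt14 (n : ℕ) (k : ℕ → ℕ) (hk : ∀ ν < n, k ν < k (ν + 1))
    (a : ℕ → ℂ) (ha : ∀ ν ≤ n, a ν ≠ 0)
    (hcond : ∀ ν ≤ n, ∀ t : ℂ, ‖t‖ ≤ 1 →
      1 / 2 ≤ (∑ j ∈ Finset.range (n - ν + 1), (a (j + ν) / a ν) * t ^ (k (j + ν) - k ν)).re)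
    (z : ℂ) (hz : ‖z‖ ≤ 1) :
    (∀ ν < n, ‖∑ μ ∈ Finset.Icc (ν + 1) n, a μ * z ^ k μ‖
        ≤ ‖∑ μ ∈ Finset.Icc ν n, a μ * z ^ k μ‖)
    ∧ ‖∑ μ ∈ Finset.Icc 0 n, a μ * z ^ k μ‖ ≤ ‖∑ ν ∈ Finset.range (n + 1), a ν * z ^ k ν‖
    ∧ ∑ μ ∈ Finset.Icc n n, a μ * z ^ k μ = a n * z ^ k n := by
  have hmono : ∀ j, j ≤ n → ∀ i, i ≤ j → k i ≤ k j := by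
    intro j
    induction j with
    | zero => intro _ i hi; simp [Nat.le_zero.mp hi]
    | succ m ih =>
      intro hjn i hi
      rcases eq_or_lt_of_le hi with h | h
      · subst h; exact le_refl _
      · exact le_trans (ih (by omega) i (by omega)) (le_of_lt (hk m (by omega)))
  refine ⟨?_, ?_, ?_⟩
  · intro ν hν
    set Q : ℂ := ∑ j ∈ Finset.range (n - ν + 1), (a (j + ν) / a ν) * z ^ (k (j + ν) - k ν)
      with hQdef
    have hterm : ∀ j ≤ n - ν, a (j + ν) * z ^ k (j + ν)
        = (a ν * z ^ k ν) * ((a (j + ν) / a ν) * z ^ (k (j + ν) - k ν)) := by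
      intro j hj
      have hkle : k ν ≤ k (j + ν) := hmono (j + ν) (by omega) ν (by omega)
      have : z ^ k ν * z ^ (k (j + ν) - k ν) = z ^ k (j + ν) := by
        rw [← pow_add]; congr 1; omega
      field_simp [ha ν (le_of_lt hν)]
      rw [← this]; ring
    have hSν : ∑ μ ∈ Finset.Icc ν n, a μ * z ^ k μ = (a ν * z ^ k ν) * Q := by
      rw [hQdef, Finset.mul_sum]
      rw [show Finset.Icc ν n = Finset.Ico ν (n + 1) by rw [Finset.Ico_add_one_right_eq_Icc]]
      rw [Finset.sum_Ico_eq_sum_range]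
      rw [show n + 1 - ν = n - ν + 1 by omega]
      apply Finset.sum_congr rfl
      intro j hj
      rw [Finset.mem_range] at hj
      rw [show ν + j = j + ν by omega]
      exact hterm j (by omega)
    have hSν1 : ∑ μ ∈ Finset.Icc (ν + 1) n, a μ * z ^ k μ = (a ν * z ^ k ν) * (Q - 1) := by
      have hsplit : Finset.Icc ν n = insert ν (Finset.Icc (ν + 1) n) := by
        ext x; simp only [Finset.mem_Icc, Finset.mem_insert]; omega
      have h2 : a ν * z ^ k ν + ∑ μ ∈ Finset.Icc (ν + 1) n, a μ * z ^ k μ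
          = (a ν * z ^ k ν) * Q := by
        have h3 := hSν
        rw [hsplit, Finset.sum_insert (by simp)] at h3
        exact h3
      linear_combination h2
    have hre : 1 / 2 ≤ Q.re := hcond ν (le_of_lt hν) z hz
    rw [hSν, hSν1, norm_mul (a ν * z ^ k ν) (Q - 1), norm_mul (a ν * z ^ k ν) Q]
    exact mul_le_mul_of_nonneg_left (norm_sub_one_le_of_half_le_re hre) (norm_nonneg _)
  · rw [show Finset.Icc 0 n = Finset.range (n + 1) by ext x; simp [Nat.lt_succ_iff]]
  · simp
end

section
/- Let P(z) = ∑_{ν=0}^n a_ν z^{k_ν} with 0 ≤ k_0 < ... < k_n and nonzero coefficients satisfying the condition min_{|t| ≤ 1} Re ∑_{j=0}^{n-ν} (a_{j+ν}/a_ν) t^{k_{j+ν}-k_ν} ≥ 1/2 for every ν = 0,...,n. Then P has no zeros in the closed unit disk if k_0 = 0, and no zeros in the closed unit disk except possibly z = 0 if k_0 > 0. -/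
open Finset

/-- Theorem 1.1(i): under condition (1.12), `P` has no zeros in the closed unit disk when
`k 0 = 0`, and no zeros there other than `0` when `k 0 > 0`. -/
theorem stmt15 (n : ℕ) (k : ℕ → ℕ) (hk : ∀ ν < n, k ν < k (ν + 1))
    (a : ℕ → ℂ) (ha : ∀ ν ≤ n, a ν ≠ 0)
    (hcond : ∀ ν ≤ n, ∀ t : ℂ, ‖t‖ ≤ 1 →
      1 / 2 ≤ (∑ j ∈ Finset.range (n - ν + 1), (a (j + ν) / a ν) * t ^ (k (j + ν) - k ν)).re) :
    (k 0 = 0 → ∀ z : ℂ, ‖z‖ ≤ 1 → ∑ ν ∈ Finset.range (n + 1), a ν * z ^ k ν ≠ 0)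
    ∧ (0 < k 0 → ∀ z : ℂ, ‖z‖ ≤ 1 → z ≠ 0 →
        ∑ ν ∈ Finset.range (n + 1), a ν * z ^ k ν ≠ 0) := by
  have h0 : a 0 ≠ 0 := ha 0 (Nat.zero_le n)
  have hmono : ∀ j ≤ n, k 0 ≤ k j := by
    intro j hj
    induction j with
    | zero => exact le_rfl
    | succ m ih =>
      exact le_trans (ih (Nat.le_of_succ_le hj)) (le_of_lt (hk m (Nat.lt_of_succ_le hj)))
  have key : ∀ z : ℂ,
      ∑ ν ∈ Finset.range (n + 1), a ν * z ^ k ν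
        = a 0 * z ^ k 0 *
          ∑ j ∈ Finset.range (n - 0 + 1), (a (j + 0) / a 0) * z ^ (k (j + 0) - k 0) := by
    intro z
    rw [Finset.mul_sum]
    refine Finset.sum_congr (by simp) ?_
    intro j hj
    simp only [Nat.add_zero, Nat.sub_zero] at *
    have hj' : j ≤ n := Nat.lt_succ_iff.mp (Finset.mem_range.mp hj)
    have hz : z ^ k 0 * z ^ (k j - k 0) = z ^ k j := by
      rw [← pow_add, Nat.add_sub_cancel' (hmono j hj')]
    calc a j * z ^ k j = a 0 * (a j / a 0) * (z ^ k 0 * z ^ (k j - k 0)) := by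
          rw [hz, mul_div_cancel₀ _ h0]
      _ = a 0 * z ^ k 0 * (a j / a 0 * z ^ (k j - k 0)) := by ring
  have hQ : ∀ z : ℂ, ‖z‖ ≤ 1 →
      (∑ j ∈ Finset.range (n - 0 + 1), (a (j + 0) / a 0) * z ^ (k (j + 0) - k 0)) ≠ 0 := by
    intro z hz hzero
    have := hcond 0 (Nat.zero_le n) z hz
    rw [hzero] at this
    norm_num at this
  constructor
  · intro hk0 z hz hzero
    rw [key z] at hzero
    rcases mul_eq_zero.mp hzero with h | h
    · rcases mul_eq_zero.mp h with h' | h'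
      · exact h0 h'
      · rw [hk0, pow_zero] at h'; exact one_ne_zero h'
    · exact hQ z hz h
  · intro hk0 z hz hzne hzero
    rw [key z] at hzero
    rcases mul_eq_zero.mp hzero with h | h
    · rcases mul_eq_zero.mp h with h' | h'
      · exact h0 h'
      · exact hzne (pow_eq_zero_iff hk0.ne' |>.mp h')
    · exact hQ z hz h
end

section
/- Let P(z) = ∑_{ν=0}^n a_ν z^{k_ν} with k_0 = 0, n ≥ 1, 0 = k_0 < k_1 < ... < k_n, nonzero coefficients, satisfying min_{|t| ≤ 1} Re ∑_{j=0}^{n-ν} (a_{j+ν}/a_ν) t^{k_{j+ν}-k_ν} ≥ 1/2 for every ν. Then |P'(z)| < k_n |P(z)| for all z in the open unit disk. -/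
open Polynomial Finset

lemma half_ineq (g : ℂ) (h : 1/2 ≤ g.re) : ‖g - 1‖ ≤ ‖g‖ := by
  rw [Complex.norm_def, Complex.norm_def]
  apply Real.sqrt_le_sqrt
  simp [Complex.normSq_apply]
  nlinarith

lemma swap_sum (n : ℕ) (f g : ℕ → ℂ) :
    ∑ ν ∈ range n, (f ν * ∑ μ ∈ range ν, g μ)
      = ∑ μ ∈ range n, (g μ * ∑ ν ∈ Finset.Ico (μ+1) n, f ν) := by
  induction n with
  | zero => simp
  | succ n ih =>
    rw [Finset.sum_range_succ, ih]
    have h1 : ∀ μ ∈ range n, g μ * ∑ ν ∈ Finset.Ico (μ+1) (n+1), f ν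
        = g μ * ∑ ν ∈ Finset.Ico (μ+1) n, f ν + g μ * f n := by
      intro μ hμ
      rw [Finset.sum_Ico_succ_top (Nat.succ_le_of_lt (Finset.mem_range.mp hμ)), mul_add]
    rw [Finset.sum_range_succ, Finset.sum_congr rfl h1, Finset.sum_add_distrib]
    rw [Finset.Ico_self, Finset.sum_empty, mul_zero, add_zero, Finset.mul_sum]
    congr 1
    exact Finset.sum_congr rfl fun i _ => mul_comm _ _


/-- Theorem 1.1(iii): under condition (1.12) with `k 0 = 0` and `n ≥ 1`, the strict
inequality `|P'(z)| < k_n |P(z)|` holds in the open unit disk. -/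
theorem stmt17 (n : ℕ) (hn : 1 ≤ n) (k : ℕ → ℕ) (hk0 : k 0 = 0)
    (hk : ∀ ν < n, k ν < k (ν + 1))
    (a : ℕ → ℂ) (ha : ∀ ν ≤ n, a ν ≠ 0)
    (hcond : ∀ ν ≤ n, ∀ t : ℂ, ‖t‖ ≤ 1 →
      1 / 2 ≤ (∑ j ∈ Finset.range (n - ν + 1), (a (j + ν) / a ν) * t ^ (k (j + ν) - k ν)).re)
    (P : Polynomial ℂ) (hP : P = ∑ ν ∈ Finset.range (n + 1), C (a ν) * X ^ k ν)
    (z : ℂ) (hz : ‖z‖ < 1) :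
    ‖P.derivative.eval z‖ < (k n : ℝ) * ‖P.eval z‖ := by
  -- monotonicity of k
  have hkmono : ∀ j, j ≤ n → ∀ i, i ≤ j → k i ≤ k j := by
    intro j
    induction j with
    | zero => intro _ i hij; simp [Nat.le_zero.mp hij]
    | succ m ihm =>
      intro hjn i hij
      rcases Nat.eq_or_lt_of_le hij with h | h
      · simp [h]
      · exact le_trans (ihm (by omega) i (by omega)) (le_of_lt (hk m (by omega)))
  set T : ℕ → ℂ → ℂ := fun ν w => ∑ i ∈ Finset.Ico ν (n+1), a i * w ^ k i with hT
  -- T ν w = a ν w^{k ν} * g ν w  for ν ≤ n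
  have hTg : ∀ ν ≤ n, ∀ w : ℂ,
      T ν w = a ν * w ^ k ν * ∑ j ∈ Finset.range (n - ν + 1), (a (j + ν) / a ν) * w ^ (k (j + ν) - k ν) := by
    intro ν hν w
    rw [hT]
    simp only
    rw [Finset.sum_Ico_eq_sum_range]
    have hcard : n + 1 - ν = n - ν + 1 := by omega
    rw [hcard, Finset.mul_sum]
    refine Finset.sum_congr rfl fun j hj => ?_
    have hjν : ν + j ≤ n := by
      have := Finset.mem_range.mp hj; omega
    have hkle : k ν ≤ k (j + ν) := hkmono (j + ν) (by omega) ν (by omega)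
    have : a ν * w ^ k ν * (a (j + ν) / a ν * w ^ (k (j + ν) - k ν))
        = (a ν * (a (j + ν) / a ν)) * (w ^ k ν * w ^ (k (j + ν) - k ν)) := by ring
    rw [add_comm ν j, this, mul_div_cancel₀ _ (ha ν hν), ← pow_add,
      Nat.add_sub_cancel' hkle]
  -- step: ‖T (ν+1) w‖ ≤ ‖T ν w‖
  have hstep : ∀ ν ≤ n, ∀ w : ℂ, ‖w‖ ≤ 1 → ‖T (ν+1) w‖ ≤ ‖T ν w‖ := by
    intro ν hν w hw
    set g : ℂ := ∑ j ∈ Finset.range (n - ν + 1), (a (j + ν) / a ν) * w ^ (k (j + ν) - k ν) with hg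
    have h1 : T ν w = a ν * w ^ k ν * g := hTg ν hν w
    have h2 : T (ν+1) w = a ν * w ^ k ν * (g - 1) := by
      have hsplit : T ν w = a ν * w ^ k ν + T (ν+1) w := by
        rw [hT]; simp only
        exact Finset.sum_eq_sum_Ico_succ_bot (by omega) _
      have := hsplit
      rw [h1] at this
      linear_combination -this
    rw [h1, h2, norm_mul (a ν * w ^ k ν), norm_mul (a ν * w ^ k ν)]
    exact mul_le_mul_of_nonneg_left (half_ineq g (hcond ν hν w hw)) (norm_nonneg (a ν * w ^ k ν))
  have hT0 : ∀ w : ℂ, T 0 w = P.eval w := by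
    intro w
    rw [hT, hP]
    simp only [eval_finset_sum, eval_mul, eval_C, eval_pow, eval_X]
    rw [Finset.range_eq_Ico]
  have hchain : ∀ m, m ≤ n + 1 → ∀ w : ℂ, ‖w‖ ≤ 1 → ‖T m w‖ ≤ ‖P.eval w‖ := by
    intro m
    induction m with
    | zero => intro _ w _; rw [hT0]
    | succ m ihm =>
      intro hm w hw
      exact le_trans (hstep m (by omega) w hw) (ihm (by omega) w hw)
  have hTtop : ∀ w : ℂ, T (n+1) w = 0 := by
    intro w; rw [hT]; simp
  -- derivative identity
  have hderiv : ∀ w : ℂ, w * P.derivative.eval w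
      = ∑ ν ∈ Finset.range (n+1), (a ν * w ^ k ν) * (k ν : ℂ) := by
    intro w
    rw [hP, derivative_sum]
    simp only [derivative_C_mul, derivative_X_pow, eval_finset_sum, eval_mul, eval_C,
      eval_pow, eval_X, eval_natCast, eval_mul, Finset.mul_sum]
    refine Finset.sum_congr rfl fun ν _ => ?_
    rcases Nat.eq_zero_or_pos (k ν) with h | h
    · simp [h]
    · have : w * w ^ (k ν - 1) = w ^ k ν := by
        rw [← pow_succ']
        congr 1; omega
      rw [show w * (a ν * (↑(k ν) * w ^ (k ν - 1))) = a ν * (w * w ^ (k ν -1)) * (k ν : ℂ) by ring,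
        this]
  -- rewrite using T
  have hderiv2 : ∀ w : ℂ, w * P.derivative.eval w
      = ∑ μ ∈ Finset.range n, ((k (μ+1) : ℂ) - (k μ : ℂ)) * T (μ+1) w := by
    intro w
    rw [hderiv w]
    have hcast : ∀ ν ∈ Finset.range (n+1), (a ν * w ^ k ν) * (k ν : ℂ)
        = (a ν * w ^ k ν) * ∑ μ ∈ Finset.range ν, ((k (μ+1) : ℂ) - (k μ : ℂ)) := by
      intro ν hν
      rw [Finset.sum_range_sub (fun i => (k i : ℂ)), hk0]
      simp
    rw [Finset.sum_congr rfl hcast, swap_sum (n+1) (fun ν => a ν * w ^ k ν)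
      (fun μ => (k (μ+1) : ℂ) - (k μ : ℂ))]
    rw [Finset.sum_range_succ]
    have h0 : T (n+1) w = ∑ ν ∈ Finset.Ico (n+1) (n+1), a ν * w ^ k ν := by rw [hT]
    rw [← h0, hTtop w, mul_zero, add_zero]
  -- bound on closed disk
  have hbound : ∀ w : ℂ, ‖w‖ ≤ 1 → ‖w * P.derivative.eval w‖ ≤ (k n : ℝ) * ‖P.eval w‖ := by
    intro w hw
    rw [hderiv2 w]
    calc ‖∑ μ ∈ Finset.range n, ((k (μ+1) : ℂ) - (k μ : ℂ)) * T (μ+1) w‖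
        ≤ ∑ μ ∈ Finset.range n, ‖((k (μ+1) : ℂ) - (k μ : ℂ)) * T (μ+1) w‖ :=
          norm_sum_le _ _
      _ ≤ ∑ μ ∈ Finset.range n, ((k (μ+1) : ℝ) - (k μ : ℝ)) * ‖P.eval w‖ := by
          refine Finset.sum_le_sum fun μ hμ => ?_
          rw [norm_mul]
          have hkle : k μ ≤ k (μ+1) := le_of_lt (hk μ (Finset.mem_range.mp hμ))
          have h1 : ‖(k (μ+1) : ℂ) - (k μ : ℂ)‖ = (k (μ+1) : ℝ) - (k μ : ℝ) := by
            rw [show (k (μ+1) : ℂ) - (k μ : ℂ) = ((k (μ+1) - k μ : ℕ) : ℂ) by push_cast [hkle]; ring]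
            rw [Complex.norm_natCast]
            push_cast [hkle]; ring
          rw [h1]
          refine mul_le_mul_of_nonneg_left ?_ (by push_cast [hkle]; simp [sub_nonneg]; exact_mod_cast hkle)
          exact hchain (μ+1) (by have := Finset.mem_range.mp hμ; omega) w hw
      _ = (k n : ℝ) * ‖P.eval w‖ := by
          rw [← Finset.sum_mul, Finset.sum_range_sub (fun i => (k i : ℝ)), hk0]
          simp
  -- k n ≥ 1
  have hkn1 : 1 ≤ k n := by
    have h1 := hk 0 hn
    rw [Nat.zero_add] at h1
    have h2 := hkmono n le_rfl 1 hn
    omega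
  -- P does not vanish on the closed disk
  have hPne : ∀ w : ℂ, ‖w‖ ≤ 1 → P.eval w ≠ 0 := by
    intro w hw
    have h := hcond 0 (Nat.zero_le n) w hw
    have hgP : P.eval w = a 0 * (∑ j ∈ Finset.range (n - 0 + 1), (a (j + 0) / a 0) * w ^ (k (j + 0) - k 0)) := by
      rw [← hT0 w, hTg 0 (Nat.zero_le n) w, hk0]; ring
    intro h0
    rw [h0] at hgP
    have hs : (∑ j ∈ Finset.range (n - 0 + 1), (a (j + 0) / a 0) * w ^ (k (j + 0) - k 0)) = 0 := by
      rcases mul_eq_zero.mp hgP.symm with h1 | h1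
      · exact absurd h1 (ha 0 (Nat.zero_le n))
      · exact h1
    rw [hs] at h
    norm_num at h
  set c : ℂ := (k n : ℂ) with hc
  have hcne : c ≠ 0 := by
    rw [hc]
    exact_mod_cast Nat.cast_ne_zero.mpr (by omega)
  set G : ℂ → ℂ := fun w => P.derivative.eval w / (c * P.eval w) with hG
  have hGdiff : DifferentiableOn ℂ G (Metric.closedBall (0:ℂ) 1) := by
    apply DifferentiableOn.div
    · exact (Polynomial.differentiable _).differentiableOn
    · exact (differentiable_const c).differentiableOn.mul (Polynomial.differentiable _).differentiableOn
    · intro w hw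
      refine mul_ne_zero hcne (hPne w ?_)
      simpa [Complex.dist_eq] using Metric.mem_closedBall.mp hw
  have hGc : DiffContOnCl ℂ G (Metric.ball (0:ℂ) 1) := by
    have h := hGdiff
    rw [← closure_ball (0:ℂ) one_ne_zero] at h
    exact h.diffContOnCl
  have hfr : ∀ w ∈ frontier (Metric.ball (0:ℂ) 1), ‖G w‖ ≤ 1 := by
    intro w hw
    rw [frontier_ball (0:ℂ) one_ne_zero] at hw
    have hw1 : ‖w‖ = 1 := by simpa [Complex.dist_eq] using hw
    have hPw : P.eval w ≠ 0 := hPne w (le_of_eq hw1)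
    have hPwpos : 0 < ‖P.eval w‖ := norm_pos_iff.mpr hPw
    have h1 : ‖G w‖ = ‖P.derivative.eval w‖ / ((k n : ℝ) * ‖P.eval w‖) := by
      rw [hG]
      simp only
      rw [norm_div, norm_mul, hc, Complex.norm_natCast]
    rw [h1, div_le_one (by positivity)]
    have := hbound w (le_of_eq hw1)
    rwa [norm_mul, hw1, one_mul] at this
  have hle : ∀ w, w ∈ Metric.closedBall (0:ℂ) 1 → ‖G w‖ ≤ 1 := by
    intro w hw
    refine Complex.norm_le_of_forall_mem_frontier_norm_le Metric.isBounded_ball hGc hfr ?_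
    rwa [closure_ball (0:ℂ) one_ne_zero]
  -- now suppose the strict inequality fails at z
  by_contra hcon
  push_neg at hcon
  have hzball : z ∈ Metric.ball (0:ℂ) 1 := by
    simpa [Complex.dist_eq] using hz
  have hPz : P.eval z ≠ 0 := hPne z hz.le
  have hPzpos : 0 < ‖P.eval z‖ := norm_pos_iff.mpr hPz
  have hGz : ‖G z‖ = ‖P.derivative.eval z‖ / ((k n : ℝ) * ‖P.eval z‖) := by
    rw [hG]
    simp only
    rw [norm_div, norm_mul, hc, Complex.norm_natCast]
  have hGz1 : ‖G z‖ = 1 := by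
    refine le_antisymm (hle z (Metric.ball_subset_closedBall hzball)) ?_
    rw [hGz, le_div_iff₀ (by positivity), one_mul]
    exact hcon
  have hmax : IsMaxOn (norm ∘ G) (Metric.ball (0:ℂ) 1) z := by
    intro y hy
    have := hle y (Metric.ball_subset_closedBall hy)
    simp only [Function.comp_apply, Set.mem_setOf_eq]
    rw [hGz1]
    exact this
  have heq := Complex.eqOn_of_isPreconnected_of_isMaxOn_norm
    (convex_ball (0:ℂ) 1).isPreconnected Metric.isOpen_ball
    (hGdiff.mono Metric.ball_subset_closedBall) hzball hmax
  have hpoly : ∀ y ∈ Metric.ball (0:ℂ) 1, P.derivative.eval y = (G z * c) * P.eval y := by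
    intro y hy
    have h := heq hy
    simp only [Function.const_apply] at h
    have hyn : ‖y‖ < 1 := by simpa [Complex.dist_eq] using hy
    have hden : c * P.eval y ≠ 0 := mul_ne_zero hcne (hPne y hyn.le)
    have h2 : P.derivative.eval y / (c * P.eval y) = G z := h
    rw [div_eq_iff hden] at h2
    rw [h2]; ring
  have hQ : P.derivative - Polynomial.C (G z * c) * P = 0 := by
    apply Polynomial.eq_zero_of_infinite_isRoot
    apply Set.infinite_of_injective_forall_mem (f := fun m : ℕ => ((m:ℂ)+2)⁻¹)
    · intro m m' hmm'
      simp only at hmm'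
      have : ((m:ℂ)+2) = ((m':ℂ)+2) := inv_injective hmm'
      exact_mod_cast add_left_injective 2 this
    · intro m
      have hmem : ((m:ℂ)+2)⁻¹ ∈ Metric.ball (0:ℂ) 1 := by
        have h1 : ‖((m:ℂ)+2)‖ = (m:ℝ)+2 := by
          rw [show ((m:ℂ)+2) = ((m+2 : ℕ) : ℂ) by push_cast; ring, Complex.norm_natCast]
          push_cast; ring
        have : ‖((m:ℂ)+2)⁻¹‖ < 1 := by
          rw [norm_inv, h1]
          rw [inv_lt_one_iff₀]
          right
          linarith [Nat.cast_nonneg (α := ℝ) m]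
        simpa [Complex.dist_eq] using this
      simp only [Set.mem_setOf_eq, Polynomial.IsRoot, Polynomial.eval_sub, Polynomial.eval_mul,
        Polynomial.eval_C]
      rw [hpoly _ hmem]
      ring
  have hd : P.derivative = Polynomial.C (G z * c) * P := by
    have := sub_eq_zero.mp hQ
    exact this
  have hPne0 : P ≠ 0 := by
    intro h
    exact hPne 0 (by norm_num) (by simp [h])
  have hcoef : P.coeff (k n) = a n := by
    rw [hP, Polynomial.finset_sum_coeff]
    simp only [Polynomial.coeff_C_mul, Polynomial.coeff_X_pow]
    rw [Finset.sum_eq_single n]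
    · simp
    · intro ν hν hνn
      have hνlt : ν < n := by
        have := Finset.mem_range.mp hν; omega
      have : k ν < k n :=
        lt_of_le_of_lt (hkmono (n-1) (by omega) ν (by omega)) (by
          have := hk (n-1) (by omega)
          have hrw : n - 1 + 1 = n := by omega
          rwa [hrw] at this)
      simp only [ite_eq_right_iff, mul_eq_zero]
      exact Or.inr fun h => absurd h (by omega)
    · intro h
      exact absurd (Finset.self_mem_range_succ n) h
  have hdegP : k n ≤ P.natDegree := Polynomial.le_natDegree_of_ne_zero (by
    rw [hcoef]; exact ha n le_rfl)
  have hGzne : G z ≠ 0 := by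
    intro h
    rw [h] at hGz1
    simp at hGz1
  have h1 : (Polynomial.C (G z * c) * P).natDegree = P.natDegree :=
    Polynomial.natDegree_C_mul (mul_ne_zero hGzne hcne)
  have h2 : P.derivative.natDegree < P.natDegree :=
    Polynomial.natDegree_derivative_lt (by omega)
  rw [hd, h1] at h2
  exact lt_irrefl _ h2
end
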